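/- Let (T,X) be a semiflow on a metric space X which is topologically transitive, has a dense set of periodic points, and is non-minimal. Then (T,X) is sensitive on initial conditions. -/

import Mathlib

/-- The orbit of a point under the action `φ`. -/
def Semiflow.orb {T X : Type*} (φ : T → X → X) (x : X) : Set X :=
  Set.range fun t => φ t x

/-- The fixer of a point: the set of monoid elements fixing it. -/
def Semiflow.fix {T X : Type*} (φ : T → X → X) (x : X) : Set T :=
  {t | φ t x = x}

/-- A subset `A` of `T` is syndetic if some compact `K ⊆ T` satisfies
`(t + K) ∩ A ≠ ∅` for every `t`. -/
def Syndetic {T : Type*} [AddCommMonoid T] [TopologicalSpace T] (A : Set T) : Prop :=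
  ∃ K : Set T, IsCompact K ∧ ∀ t : T, ∃ k ∈ K, t + k ∈ A

/-- A point is periodic if its fixer is syndetic (it is automatically a submonoid). -/
def Semiflow.Periodic {T X : Type*} [AddCommMonoid T] [TopologicalSpace T]
    (φ : T → X → X) (x : X) : Prop :=
  Syndetic (Semiflow.fix φ x)

/-- Topological transitivity. -/
def Semiflow.TopTrans {T X : Type*} [TopologicalSpace X] (φ : T → X → X) : Prop :=
  ∀ U V : Set X, IsOpen U → IsOpen V → U.Nonempty → V.Nonempty →
    ∃ t : T, ((fun x => φ t x) '' U ∩ V).Nonempty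

/-- Dense set of periodic points. -/
def Semiflow.DPP {T X : Type*} [AddCommMonoid T] [TopologicalSpace T] [TopologicalSpace X]
    (φ : T → X → X) : Prop :=
  Dense {x : X | Semiflow.Periodic φ x}

/-- Minimality: every orbit closure is the whole space. -/
def Semiflow.Minimal {T X : Type*} [TopologicalSpace X] (φ : T → X → X) : Prop :=
  ∀ y : X, closure (Semiflow.orb φ y) = Set.univ

/-- Sensitivity on initial conditions. -/
def Semiflow.Sensitive {T X : Type*} [PseudoMetricSpace X] (φ : T → X → X) : Prop :=
  ∃ c > (0 : ℝ), ∀ x : X, ∀ ε > (0 : ℝ),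
    ∃ y : X, dist x y < ε ∧ ∃ t : T, c ≤ dist (φ t x) (φ t y)

/-- Eventual sensitivity on initial conditions. -/
def Semiflow.EvSensitive {T X : Type*} [PseudoMetricSpace X] (φ : T → X → X) : Prop :=
  ∃ c > (0 : ℝ), ∀ x : X, ∀ ε > (0 : ℝ), ∃ t₀ t : T, ∃ y : X,
    dist (φ t₀ x) y < ε ∧ c ≤ dist (φ t (φ t₀ x)) (φ t y)

/-- Uniform equicontinuity of the semiflow. -/
def Semiflow.UnifEquicont {T X : Type*} [PseudoMetricSpace X] (φ : T → X → X) : Prop :=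
  ∀ ε > (0 : ℝ), ∃ δ > (0 : ℝ), ∀ x₁ x₂ : X, dist x₁ x₂ < δ →
    ∀ t : T, dist (φ t x₁) (φ t x₂) < ε

section Aux

variable {T X : Type*}

lemma Semiflow.cont_apply [TopologicalSpace T] [TopologicalSpace X]
    {φ : T → X → X} (hcont : Continuous fun p : T × X => φ p.1 p.2) (t : T) :
    Continuous fun x => φ t x :=
  hcont.comp (Continuous.prodMk_right t)

/-- Orbit closures are invariant. -/
lemma Semiflow.closure_orb_inv [AddCommMonoid T] [TopologicalSpace T] [TopologicalSpace X]
    {φ : T → X → X} (hcont : Continuous fun p : T × X => φ p.1 p.2)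
    (hact : ∀ (s t : T) (x : X), φ s (φ t x) = φ (s + t) x)
    (u : X) (t : T) {a : X} (ha : a ∈ closure (Semiflow.orb φ u)) :
    φ t a ∈ closure (Semiflow.orb φ u) := by
  have himg : (fun x => φ t x) '' Semiflow.orb φ u ⊆ Semiflow.orb φ u := by
    rintro _ ⟨_, ⟨s, rfl⟩, rfl⟩
    exact ⟨t + s, (hact t s u).symm⟩
  have h1 : φ t a ∈ (fun x => φ t x) '' closure (Semiflow.orb φ u) := ⟨a, ha, rfl⟩
  have h2 := image_closure_subset_closure_image (Semiflow.cont_apply hcont t) h1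
  exact closure_mono himg h2

/-- Tube lemma for a compact set of times. -/
lemma Semiflow.tube [TopologicalSpace T] [PseudoMetricSpace X]
    {φ : T → X → X} (hcont : Continuous fun p : T × X => φ p.1 p.2)
    {K : Set T} (hK : IsCompact K) (a : X) {c : ℝ} (hc : 0 < c) :
    ∃ W : Set X, IsOpen W ∧ a ∈ W ∧ ∀ w ∈ W, ∀ k ∈ K, dist (φ k w) (φ k a) < c := by
  have hco : Continuous fun p : T × X => dist (φ p.1 p.2) (φ p.1 a) :=
    Continuous.dist hcont (hcont.comp (continuous_fst.prodMk continuous_const))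
  have hn : IsOpen {p : T × X | dist (φ p.1 p.2) (φ p.1 a) < c} :=
    isOpen_lt hco continuous_const
  have hsub : K ×ˢ ({a} : Set X) ⊆ {p : T × X | dist (φ p.1 p.2) (φ p.1 a) < c} := by
    rintro ⟨k, w⟩ ⟨hk, hw⟩
    rcases hw with rfl
    simpa using hc
  obtain ⟨U, V, _, hVo, hKU, haV, hUV⟩ :=
    generalized_tube_lemma hK isCompact_singleton hn hsub
  refine ⟨V, hVo, haV rfl, fun w hw k hk => ?_⟩
  have hm : (k, w) ∈ U ×ˢ V := ⟨hKU hk, hw⟩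
  exact hUV hm

/-- Points in the orbit closure of a periodic point return close to it
with times in the compact syndetic witness. -/
lemma Semiflow.returns [AddCommMonoid T] [TopologicalSpace T] [PseudoMetricSpace X]
    {φ : T → X → X} (hcont : Continuous fun p : T × X => φ p.1 p.2)
    (hact : ∀ (s t : T) (x : X), φ s (φ t x) = φ (s + t) x)
    {q : X} {K : Set T} (hKc : IsCompact K)
    (hK : ∀ t : T, ∃ k ∈ K, t + k ∈ Semiflow.fix φ q)
    {z : X} (hz : z ∈ closure (Semiflow.orb φ q)) {ε : ℝ} (hε : 0 < ε) :
    ∃ k ∈ K, dist (φ k z) q < ε := by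
  obtain ⟨W, hWo, hzW, hW⟩ := Semiflow.tube hcont hKc z hε
  obtain ⟨w, hwW, hworb⟩ := (mem_closure_iff.1 hz) W hWo hzW
  obtain ⟨t, rfl⟩ := hworb
  obtain ⟨k, hkK, hkfix⟩ := hK t
  refine ⟨k, hkK, ?_⟩
  have h1 : dist (φ k (φ t q)) (φ k z) < ε := hW _ hwW k hkK
  have h2 : φ k (φ t q) = q := by
    rw [hact, add_comm]
    exact hkfix
  rw [h2] at h1
  rwa [dist_comm]

/-- The orbit of a periodic point is contained in a compact set. -/
lemma Semiflow.orb_subset_image [AddCommMonoid T] [TopologicalSpace T]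
    {φ : T → X → X}
    (hact : ∀ (s t : T) (x : X), φ s (φ t x) = φ (s + t) x)
    {q : X} {K : Set T}
    (hK : ∀ t : T, ∃ k ∈ K, t + k ∈ Semiflow.fix φ q) :
    Semiflow.orb φ q ⊆ (fun k => φ k q) '' K := by
  rintro _ ⟨t, rfl⟩
  obtain ⟨k, hkK, hk1⟩ := hK t
  obtain ⟨k', hk'K, hk2⟩ := hK k
  refine ⟨k', hk'K, ?_⟩
  have hk1' : φ (t + k) q = q := hk1
  have hk2' : φ (k + k') q = q := hk2
  calc φ k' q = φ k' (φ (t + k) q) := by rw [hk1']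
    _ = φ (k' + (t + k)) q := hact _ _ _
    _ = φ (t + (k + k')) q := by
        rw [add_comm k' (t + k), add_assoc]
    _ = φ t (φ (k + k') q) := (hact _ _ _).symm
    _ = φ t q := by rw [hk2']

end Aux

/-- A topologically transitive, non-minimal semiflow with dense periodic
points is sensitive on initial conditions. -/
theorem sensitive_of_topTrans_dpp_nonminimal
{T X : Type*} [AddCommMonoid T] [TopologicalSpace T] [ContinuousAdd T]
    [MetricSpace X]
    (hT : ¬ IsCompact (Set.univ : Set T))
    (φ : T → X → X)
    (hcont : Continuous fun p : T × X => φ p.1 p.2)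
    (hact : ∀ (s t : T) (x : X), φ s (φ t x) = φ (s + t) x)
    (hid : ∀ x : X, φ 0 x = x)
    (htt : Semiflow.TopTrans φ) (hdpp : Semiflow.DPP φ)
    (hnmin : ¬ Semiflow.Minimal φ) :
    Semiflow.Sensitive φ := by
  classical
  simp only [Semiflow.Minimal] at hnmin
  push_neg at hnmin
  obtain ⟨y, hy⟩ := hnmin
  set A := closure (Semiflow.orb φ y) with hA
  have hAne : A.Nonempty := ⟨y, subset_closure ⟨0, hid y⟩⟩
  have hAcl : IsClosed A := isClosed_closure
  obtain ⟨v, hv⟩ : ∃ v, v ∉ A := by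
    by_contra h
    push_neg at h
    exact hy (Set.eq_univ_iff_forall.2 h)
  obtain ⟨q, hqper, hqA⟩ := hdpp.exists_mem_open hAcl.isOpen_compl ⟨v, hv⟩
  obtain ⟨Kq, hKqc, hKq⟩ := hqper
  set C := closure (Semiflow.orb φ q) with hC
  have hCne : C.Nonempty := ⟨q, subset_closure ⟨0, hid q⟩⟩
  have hCcomp : IsCompact C := by
    have hck : Continuous fun k : T => φ k q :=
      hcont.comp (continuous_id.prodMk continuous_const)
    have himg : IsCompact ((fun k => φ k q) '' Kq) := hKqc.image hck
    exact himg.of_isClosed_subset isClosed_closure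
      (closure_minimal (Semiflow.orb_subset_image hact hKq) himg.isClosed)
  have hdisj : ∀ z ∈ C, z ∉ A := by
    intro z hzC hzA
    apply hqA
    have hqcl : q ∈ closure A := by
      rw [Metric.mem_closure_iff]
      intro ε hε
      obtain ⟨k, hkK, hk⟩ := Semiflow.returns hcont hact hKqc hKq hzC hε
      exact ⟨φ k z, Semiflow.closure_orb_inv hcont hact y k hzA, by rwa [dist_comm]⟩
    rwa [hAcl.closure_eq] at hqcl
  obtain ⟨w0, hw0C, hw0min⟩ := hCcomp.exists_isMinOn hCne
      ((Metric.continuous_infDist_pt A).continuousOn)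
  set g := Metric.infDist w0 A with hg
  have hgpos : 0 < g := (hAcl.notMem_iff_infDist_pos hAne).1 (hdisj w0 hw0C)
  refine ⟨g/8, by positivity, ?_⟩
  intro x ε hε
  have hdich : g/2 ≤ Metric.infDist x A ∨ g/2 ≤ Metric.infDist x C := by
    by_contra h
    push_neg at h
    obtain ⟨h1, h2⟩ := h
    obtain ⟨a, haA, hxa⟩ := (Metric.infDist_lt_iff hAne).1 h1
    obtain ⟨w, hwC, hxw⟩ := (Metric.infDist_lt_iff hCne).1 h2
    have hle1 : Metric.infDist w A ≤ dist w a := Metric.infDist_le_dist_of_mem haA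
    have hlt : dist w a < g := by
      calc dist w a ≤ dist w x + dist x a := dist_triangle _ _ _
        _ < g/2 + g/2 := by rw [dist_comm w x]; exact add_lt_add hxw hxa
        _ = g := by ring
    have hmin := (isMinOn_iff.1 hw0min) w hwC
    linarith
  obtain ⟨u, hufar⟩ : ∃ u : X, g/2 ≤ Metric.infDist x (closure (Semiflow.orb φ u)) := by
    rcases hdich with h | h
    · exact ⟨y, h⟩
    · exact ⟨q, h⟩
  set D := closure (Semiflow.orb φ u) with hD
  have hDne : D.Nonempty := ⟨u, subset_closure ⟨0, hid u⟩⟩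
  have hDfar : ∀ b ∈ D, g/2 ≤ dist x b := fun b hb =>
    le_trans hufar (Metric.infDist_le_dist_of_mem hb)
  set δ := min ε (g/8) with hδ
  have hδpos : 0 < δ := lt_min hε (by positivity)
  obtain ⟨p, hpper, hpball⟩ :=
    hdpp.exists_mem_open Metric.isOpen_ball ⟨x, Metric.mem_ball_self hδpos⟩
  obtain ⟨Kp, hKpc, hKp⟩ := hpper
  obtain ⟨a0, ha0D⟩ := hDne
  obtain ⟨W, hWo, ha0W, hW⟩ :=
    Semiflow.tube hcont hKpc a0 (show (0:ℝ) < g/8 by positivity)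
  obtain ⟨t, w', hw'⟩ := htt (Metric.ball x δ) W Metric.isOpen_ball hWo
      ⟨x, Metric.mem_ball_self hδpos⟩ ⟨a0, ha0W⟩
  obtain ⟨⟨z, hzball, rfl⟩, hzW⟩ := hw'
  obtain ⟨k, hkK, hkfix⟩ := hKp t
  have hsp : φ (t + k) p = p := hkfix
  have hsz : φ (t + k) z = φ k (φ t z) := by rw [hact k t z, add_comm]
  have h1 : dist (φ (t + k) z) (φ k a0) < g/8 := by
    rw [hsz]; exact hW _ hzW k hkK
  have h2 : φ k a0 ∈ D := Semiflow.closure_orb_inv hcont hact u k ha0D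
  have h3 : g/2 ≤ dist x (φ k a0) := hDfar _ h2
  have h4 : g/2 - g/8 ≤ dist x (φ (t + k) z) := by
    have htr := dist_triangle x (φ (t + k) z) (φ k a0)
    linarith
  have hxp : dist x p < δ := by
    have := Metric.mem_ball.1 hpball
    rwa [dist_comm]
  have hxz : dist x z < δ := by
    have := Metric.mem_ball.1 hzball
    rwa [dist_comm]
  have hδε : δ ≤ ε := min_le_left _ _
  have hδg : δ ≤ g/8 := min_le_right _ _
  have h5 : g/4 ≤ dist (φ (t + k) p) (φ (t + k) z) := by
    rw [hsp]
    have htr := dist_triangle x p (φ (t + k) z)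
    linarith
  rcases le_or_gt (g/8) (dist (φ (t + k) x) (φ (t + k) p)) with hcase | hcase
  · exact ⟨p, lt_of_lt_of_le hxp hδε, t + k, hcase⟩
  · refine ⟨z, lt_of_lt_of_le hxz hδε, t + k, ?_⟩
    have htr := dist_triangle (φ (t + k) p) (φ (t + k) x) (φ (t + k) z)
    rw [dist_comm (φ (t + k) p) (φ (t + k) x)] at htr
    linarith
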